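/- Let u : ℝ≥0² → ℝ≥0 be doubly increasing with u(0,t) = u(t,0) = 0 for all t ≥ 0. Then for any C > 0 there exists a continuous doubly increasing function ũ on ℝ≥0² such that 0 ≤ ũ ≤ u everywhere and (∂ũ/∂x)(∂ũ/∂y) ≥ C at every point where ũ ≠ u and ũ is differentiable. -/

import Mathlib

open Real Filter

namespace Stmt15

/-- Achievable values at a point: chains of "corner" moves staying below the obstacle `u`. -/
inductive Ach (u : ℝ × ℝ → ℝ) (c : ℝ) : ℝ × ℝ → ℝ → Prop where
  | base (p : ℝ × ℝ) (h1 : 0 ≤ p.1) (h2 : 0 ≤ p.2) : Ach u c p 0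
  | free (p q : ℝ × ℝ) (m : ℝ) (h : Ach u c p m) (h1 : p.1 ≤ q.1) (h2 : p.2 ≤ q.2) :
      Ach u c q m
  | corner (p q : ℝ × ℝ) (m : ℝ) (h : Ach u c p m) (h1 : p.1 ≤ q.1) (h2 : p.2 ≤ q.2)
      (hobs : ∀ θ : ℝ, 0 ≤ θ → θ ≤ 1 →
        m + c * θ * Real.sqrt ((q.1 - p.1) * (q.2 - p.2)) ≤
          u (p.1 + θ * (q.1 - p.1), p.2 + θ * (q.2 - p.2))) :
      Ach u c q (m + c * Real.sqrt ((q.1 - p.1) * (q.2 - p.2)))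

noncomputable def vv (u : ℝ × ℝ → ℝ) (c : ℝ) (p : ℝ × ℝ) : ℝ := sSup {m | Ach u c p m}

variable {u : ℝ × ℝ → ℝ} {c : ℝ}

lemma Ach.quad {p : ℝ × ℝ} {m : ℝ} (h : Ach u c p m) : 0 ≤ p.1 ∧ 0 ≤ p.2 := by
  induction h with
  | base p h1 h2 => exact ⟨h1, h2⟩
  | free p q m h h1 h2 ih => exact ⟨ih.1.trans h1, ih.2.trans h2⟩
  | corner p q m h h1 h2 hobs ih => exact ⟨ih.1.trans h1, ih.2.trans h2⟩

/-- Cauchy–Schwarz for square roots. -/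
lemma sqrt_cs {a b d e : ℝ} (ha : 0 ≤ a) (hb : 0 ≤ b) (hd : 0 ≤ d) (he : 0 ≤ e) :
    Real.sqrt (a * b) + Real.sqrt (d * e) ≤ Real.sqrt ((a + d) * (b + e)) := by
  have hab : Real.sqrt (a * b) ^ 2 = a * b := Real.sq_sqrt (by positivity)
  have hde : Real.sqrt (d * e) ^ 2 = d * e := Real.sq_sqrt (by positivity)
  have hmul : Real.sqrt (a * b) * Real.sqrt (d * e) = Real.sqrt (a * e) * Real.sqrt (d * b) := by
    rw [← Real.sqrt_mul (by positivity), ← Real.sqrt_mul (by positivity)]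
    congr 1
    ring
  have h2 : Real.sqrt (a * e) * Real.sqrt (d * b) ≤ (a * e + d * b) / 2 := by
    nlinarith [sq_nonneg (Real.sqrt (a * e) - Real.sqrt (d * b)),
      Real.sq_sqrt (mul_nonneg ha he), Real.sq_sqrt (mul_nonneg hd hb)]
  have h1 : (Real.sqrt (a * b) + Real.sqrt (d * e)) ^ 2 ≤ (a + d) * (b + e) := by
    nlinarith [hab, hde, hmul, h2]
  calc Real.sqrt (a * b) + Real.sqrt (d * e)
      = Real.sqrt ((Real.sqrt (a * b) + Real.sqrt (d * e)) ^ 2) :=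
        (Real.sqrt_sq (by positivity)).symm
    _ ≤ Real.sqrt ((a + d) * (b + e)) := Real.sqrt_le_sqrt h1

section

variable (hmono : ∀ p q : ℝ × ℝ, 0 ≤ p.1 → 0 ≤ p.2 → p.1 ≤ q.1 → p.2 ≤ q.2 → u p ≤ u q)
  (hnonneg : ∀ p : ℝ × ℝ, 0 ≤ p.1 → 0 ≤ p.2 → 0 ≤ u p)

include hmono hnonneg

lemma ach_le_u {p : ℝ × ℝ} {m : ℝ} (h : Ach u c p m) : m ≤ u p := by
  induction h with
  | base p h1 h2 => exact hnonneg p h1 h2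
  | free p q m h h1 h2 ih => exact ih.trans (hmono p q h.quad.1 h.quad.2 h1 h2)
  | corner p q m h h1 h2 hobs ih =>
      have h2' := hobs 1 zero_le_one le_rfl
      have e1 : p.1 + 1 * (q.1 - p.1) = q.1 := by ring
      have e2 : p.2 + 1 * (q.2 - p.2) = q.2 := by ring
      rw [e1, e2] at h2'
      simpa using h2'

lemma achBdd (q : ℝ × ℝ) : BddAbove {m | Ach u c q m} :=
  ⟨u q, fun _ hm => ach_le_u hmono hnonneg hm⟩

lemma vv_nonneg {p : ℝ × ℝ} (hp1 : 0 ≤ p.1) (hp2 : 0 ≤ p.2) : 0 ≤ vv u c p :=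
  le_csSup (achBdd hmono hnonneg p) (Ach.base p hp1 hp2)

lemma vv_le_u {p : ℝ × ℝ} (hp1 : 0 ≤ p.1) (hp2 : 0 ≤ p.2) : vv u c p ≤ u p :=
  csSup_le ⟨0, Ach.base p hp1 hp2⟩ fun _ hm => ach_le_u hmono hnonneg hm

lemma vv_mono {p q : ℝ × ℝ} (hp1 : 0 ≤ p.1) (hp2 : 0 ≤ p.2) (h1 : p.1 ≤ q.1)
    (h2 : p.2 ≤ q.2) : vv u c p ≤ vv u c q :=
  csSup_le ⟨0, Ach.base p hp1 hp2⟩ fun m hm =>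
    le_csSup (achBdd hmono hnonneg q) (Ach.free p q m hm h1 h2)


lemma ach_L1 (hc : 0 ≤ c) {q : ℝ × ℝ} {m : ℝ} (h : Ach u c q m) :
    ∀ x : ℝ, 0 ≤ x → x ≤ q.1 →
      m ≤ vv u c (x, q.2) + c * Real.sqrt ((q.1 - x) * q.2) := by
  induction h with
  | base p h1 h2 =>
      intro x hx hxq
      have h0 : 0 ≤ vv u c (x, p.2) := vv_nonneg hmono hnonneg hx h2
      have h3 : 0 ≤ c * Real.sqrt ((p.1 - x) * p.2) := mul_nonneg hc (Real.sqrt_nonneg _)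
      linarith
  | free p q m h h1 h2 ih =>
      intro x hx hxq
      by_cases hxp : x ≤ p.1
      · have hI := ih x hx hxp
        have m1 : vv u c (x, p.2) ≤ vv u c (x, q.2) :=
          vv_mono hmono hnonneg hx h.quad.2 le_rfl h2
        have m2 : Real.sqrt ((p.1 - x) * p.2) ≤ Real.sqrt ((q.1 - x) * q.2) := by
          apply Real.sqrt_le_sqrt
          nlinarith [h.quad.2]
        nlinarith [mul_le_mul_of_nonneg_left m2 hc]
      · push_neg at hxp
        have hq : Ach u c (x, q.2) m := Ach.free p (x, q.2) m h hxp.le h2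
        have hm : m ≤ vv u c (x, q.2) := le_csSup (achBdd hmono hnonneg _) hq
        have h3 : 0 ≤ c * Real.sqrt ((q.1 - x) * q.2) := mul_nonneg hc (Real.sqrt_nonneg _)
        linarith
  | corner p q m h h1 h2 hobs ih =>
      intro x hx hxq
      by_cases hxp : x ≤ p.1
      · have hI := ih x hx hxp
        have hb0 : 0 ≤ p.2 := h.quad.2
        have hcs : Real.sqrt ((p.1 - x) * p.2) + Real.sqrt ((q.1 - p.1) * (q.2 - p.2)) ≤
            Real.sqrt ((q.1 - x) * q.2) := by
          have hcs0 := sqrt_cs (by linarith : (0:ℝ) ≤ p.1 - x) hb0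
            (by linarith : (0:ℝ) ≤ q.1 - p.1) (by linarith : (0:ℝ) ≤ q.2 - p.2)
          have e1 : p.1 - x + (q.1 - p.1) = q.1 - x := by ring
          have e2 : p.2 + (q.2 - p.2) = q.2 := by ring
          rw [e1, e2] at hcs0
          exact hcs0
        have m1 : vv u c (x, p.2) ≤ vv u c (x, q.2) :=
          vv_mono hmono hnonneg hx hb0 le_rfl h2
        nlinarith [mul_le_mul_of_nonneg_left hcs hc]
      · push_neg at hxp
        have hΔa : 0 < q.1 - p.1 := by linarith
        have hΔb : 0 ≤ q.2 - p.2 := by linarith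
        set S := Real.sqrt ((q.1 - p.1) * (q.2 - p.2)) with hS
        have hS0 : 0 ≤ S := Real.sqrt_nonneg _
        set t : ℝ := (x - p.1) / (q.1 - p.1) with ht
        have ht0 : 0 ≤ t := div_nonneg (by linarith) hΔa.le
        have ht1 : t ≤ 1 := by rw [ht, div_le_one hΔa]; linarith
        have hta : t * (q.1 - p.1) = x - p.1 := by rw [ht]; field_simp
        have hr2 : p.2 ≤ p.2 + t * (q.2 - p.2) := le_add_of_nonneg_right (mul_nonneg ht0 hΔb)
        have esq : Real.sqrt ((x - p.1) * (p.2 + t * (q.2 - p.2) - p.2)) = t * S := by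
          rw [show (x - p.1) * (p.2 + t * (q.2 - p.2) - p.2)
              = t ^ 2 * ((q.1 - p.1) * (q.2 - p.2)) by rw [← hta]; ring,
            Real.sqrt_mul (sq_nonneg t), Real.sqrt_sq ht0, hS]
        have hsub : Ach u c (x, p.2 + t * (q.2 - p.2))
            (m + c * Real.sqrt ((x - p.1) * (p.2 + t * (q.2 - p.2) - p.2))) := by
          apply Ach.corner p (x, p.2 + t * (q.2 - p.2)) m h hxp.le hr2
          intro θ hθ0 hθ1
          show m + c * θ * Real.sqrt ((x - p.1) * (p.2 + t * (q.2 - p.2) - p.2)) ≤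
            u (p.1 + θ * (x - p.1), p.2 + θ * (p.2 + t * (q.2 - p.2) - p.2))
          have key := hobs (θ * t) (mul_nonneg hθ0 ht0) (by nlinarith)
          have e1 : p.1 + θ * t * (q.1 - p.1) = p.1 + θ * (x - p.1) := by
            rw [← hta]; ring
          have e2 : p.2 + θ * t * (q.2 - p.2) = p.2 + θ * (p.2 + t * (q.2 - p.2) - p.2) := by
            ring
          rw [e1, e2] at key
          rw [esq]
          have e3 : c * θ * (t * S) = c * (θ * t) * S := by ring
          rw [e3]
          exact key
        rw [esq] at hsub
        have hr2' : p.2 + t * (q.2 - p.2) ≤ q.2 := by nlinarith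
        have hfree := Ach.free _ (x, q.2) _ hsub le_rfl hr2'
        have hm1 : m + c * (t * S) ≤ vv u c (x, q.2) :=
          le_csSup (achBdd hmono hnonneg _) hfree
        have h1t : (0:ℝ) ≤ 1 - t := by linarith
        have e4 : (1 - t) * S = Real.sqrt (((1 - t) * (q.1 - p.1)) * ((1 - t) * (q.2 - p.2))) := by
          rw [show ((1 - t) * (q.1 - p.1)) * ((1 - t) * (q.2 - p.2))
              = (1 - t) ^ 2 * ((q.1 - p.1) * (q.2 - p.2)) by ring,
            Real.sqrt_mul (sq_nonneg _), Real.sqrt_sq h1t, hS]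
        have hle : ((1 - t) * (q.1 - p.1)) * ((1 - t) * (q.2 - p.2)) ≤ (q.1 - x) * q.2 := by
          have e5 : (1 - t) * (q.1 - p.1) = q.1 - x := by
            rw [sub_mul, one_mul, hta]; ring
          rw [e5]
          have h6 : (1 - t) * (q.2 - p.2) ≤ q.2 := by nlinarith [h.quad.2]
          have h7 : (0:ℝ) ≤ q.1 - x := by linarith
          nlinarith [mul_nonneg h1t hΔb]
        have hrem : c * S - c * (t * S) ≤ c * Real.sqrt ((q.1 - x) * q.2) := by
          have h8 := Real.sqrt_le_sqrt hle
          calc c * S - c * (t * S) = c * ((1 - t) * S) := by ring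
            _ = c * Real.sqrt (((1 - t) * (q.1 - p.1)) * ((1 - t) * (q.2 - p.2))) := by rw [e4]
            _ ≤ c * Real.sqrt ((q.1 - x) * q.2) := mul_le_mul_of_nonneg_left h8 hc
        linarith


lemma ach_L2 (hc : 0 ≤ c) {q : ℝ × ℝ} {m : ℝ} (h : Ach u c q m) :
    ∀ y : ℝ, 0 ≤ y → y ≤ q.2 →
      m ≤ vv u c (q.1, y) + c * Real.sqrt ((q.2 - y) * q.1) := by
  induction h with
  | base p h1 h2 =>
      intro y hy hyq
      have h0 : 0 ≤ vv u c (p.1, y) := vv_nonneg hmono hnonneg h1 hy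
      have h3 : 0 ≤ c * Real.sqrt ((p.2 - y) * p.1) := mul_nonneg hc (Real.sqrt_nonneg _)
      linarith
  | free p q m h h1 h2 ih =>
      intro y hy hyq
      by_cases hyp : y ≤ p.2
      · have hI := ih y hy hyp
        have m1 : vv u c (p.1, y) ≤ vv u c (q.1, y) :=
          vv_mono hmono hnonneg h.quad.1 hy h1 le_rfl
        have m2 : Real.sqrt ((p.2 - y) * p.1) ≤ Real.sqrt ((q.2 - y) * q.1) := by
          apply Real.sqrt_le_sqrt
          nlinarith [h.quad.1]
        nlinarith [mul_le_mul_of_nonneg_left m2 hc]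
      · push_neg at hyp
        have hq : Ach u c (q.1, y) m := Ach.free p (q.1, y) m h h1 hyp.le
        have hm : m ≤ vv u c (q.1, y) := le_csSup (achBdd hmono hnonneg _) hq
        have h3 : 0 ≤ c * Real.sqrt ((q.2 - y) * q.1) := mul_nonneg hc (Real.sqrt_nonneg _)
        linarith
  | corner p q m h h1 h2 hobs ih =>
      intro y hy hyq
      by_cases hyp : y ≤ p.2
      · have hI := ih y hy hyp
        have ha0 : 0 ≤ p.1 := h.quad.1
        have hcs : Real.sqrt ((p.2 - y) * p.1) + Real.sqrt ((q.1 - p.1) * (q.2 - p.2)) ≤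
            Real.sqrt ((q.2 - y) * q.1) := by
          have hcs0 := sqrt_cs (by linarith : (0:ℝ) ≤ p.2 - y) ha0
            (by linarith : (0:ℝ) ≤ q.2 - p.2) (by linarith : (0:ℝ) ≤ q.1 - p.1)
          have e1 : p.2 - y + (q.2 - p.2) = q.2 - y := by ring
          have e2 : p.1 + (q.1 - p.1) = q.1 := by ring
          rw [e1, e2] at hcs0
          rw [show (q.1 - p.1) * (q.2 - p.2) = (q.2 - p.2) * (q.1 - p.1) from mul_comm _ _]
          exact hcs0
        have m1 : vv u c (p.1, y) ≤ vv u c (q.1, y) :=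
          vv_mono hmono hnonneg ha0 hy h1 le_rfl
        nlinarith [mul_le_mul_of_nonneg_left hcs hc]
      · push_neg at hyp
        have hΔb : 0 < q.2 - p.2 := by linarith
        have hΔa : 0 ≤ q.1 - p.1 := by linarith
        set S := Real.sqrt ((q.1 - p.1) * (q.2 - p.2)) with hS
        have hS0 : 0 ≤ S := Real.sqrt_nonneg _
        set t : ℝ := (y - p.2) / (q.2 - p.2) with ht
        have ht0 : 0 ≤ t := div_nonneg (by linarith) hΔb.le
        have ht1 : t ≤ 1 := by rw [ht, div_le_one hΔb]; linarith
        have hta : t * (q.2 - p.2) = y - p.2 := by rw [ht]; field_simp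
        have hr1 : p.1 ≤ p.1 + t * (q.1 - p.1) := le_add_of_nonneg_right (mul_nonneg ht0 hΔa)
        have esq : Real.sqrt ((p.1 + t * (q.1 - p.1) - p.1) * (y - p.2)) = t * S := by
          rw [show (p.1 + t * (q.1 - p.1) - p.1) * (y - p.2)
              = t ^ 2 * ((q.1 - p.1) * (q.2 - p.2)) by rw [← hta]; ring,
            Real.sqrt_mul (sq_nonneg t), Real.sqrt_sq ht0, hS]
        have hsub : Ach u c (p.1 + t * (q.1 - p.1), y)
            (m + c * Real.sqrt ((p.1 + t * (q.1 - p.1) - p.1) * (y - p.2))) := by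
          apply Ach.corner p (p.1 + t * (q.1 - p.1), y) m h hr1 hyp.le
          intro θ hθ0 hθ1
          show m + c * θ * Real.sqrt ((p.1 + t * (q.1 - p.1) - p.1) * (y - p.2)) ≤
            u (p.1 + θ * (p.1 + t * (q.1 - p.1) - p.1), p.2 + θ * (y - p.2))
          have key := hobs (θ * t) (mul_nonneg hθ0 ht0) (by nlinarith)
          have e1 : p.2 + θ * t * (q.2 - p.2) = p.2 + θ * (y - p.2) := by
            rw [← hta]; ring
          have e2 : p.1 + θ * t * (q.1 - p.1) = p.1 + θ * (p.1 + t * (q.1 - p.1) - p.1) := by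
            ring
          rw [e1, e2] at key
          rw [esq]
          have e3 : c * θ * (t * S) = c * (θ * t) * S := by ring
          rw [e3]
          exact key
        rw [esq] at hsub
        have hr1' : p.1 + t * (q.1 - p.1) ≤ q.1 := by nlinarith
        have hfree := Ach.free _ (q.1, y) _ hsub hr1' le_rfl
        have hm1 : m + c * (t * S) ≤ vv u c (q.1, y) :=
          le_csSup (achBdd hmono hnonneg _) hfree
        have h1t : (0:ℝ) ≤ 1 - t := by linarith
        have e4 : (1 - t) * S = Real.sqrt (((1 - t) * (q.2 - p.2)) * ((1 - t) * (q.1 - p.1))) := by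
          rw [show ((1 - t) * (q.2 - p.2)) * ((1 - t) * (q.1 - p.1))
              = (1 - t) ^ 2 * ((q.1 - p.1) * (q.2 - p.2)) by ring,
            Real.sqrt_mul (sq_nonneg _), Real.sqrt_sq h1t, hS]
        have hle : ((1 - t) * (q.2 - p.2)) * ((1 - t) * (q.1 - p.1)) ≤ (q.2 - y) * q.1 := by
          have e5 : (1 - t) * (q.2 - p.2) = q.2 - y := by
            rw [sub_mul, one_mul, hta]; ring
          rw [e5]
          have h6 : (1 - t) * (q.1 - p.1) ≤ q.1 := by nlinarith [h.quad.1]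
          have h7 : (0:ℝ) ≤ q.2 - y := by linarith
          nlinarith [mul_nonneg h1t hΔa]
        have hrem : c * S - c * (t * S) ≤ c * Real.sqrt ((q.2 - y) * q.1) := by
          have h8 := Real.sqrt_le_sqrt hle
          calc c * S - c * (t * S) = c * ((1 - t) * S) := by ring
            _ = c * Real.sqrt (((1 - t) * (q.2 - p.2)) * ((1 - t) * (q.1 - p.1))) := by rw [e4]
            _ ≤ c * Real.sqrt ((q.2 - y) * q.1) := mul_le_mul_of_nonneg_left h8 hc
        linarith


lemma vv_L1 (hc : 0 ≤ c) {q : ℝ × ℝ} (hq1 : 0 ≤ q.1) (hq2 : 0 ≤ q.2) {x : ℝ}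
    (hx : 0 ≤ x) (hxq : x ≤ q.1) :
    vv u c q ≤ vv u c (x, q.2) + c * Real.sqrt ((q.1 - x) * q.2) :=
  csSup_le ⟨0, Ach.base q hq1 hq2⟩ fun _ hm => ach_L1 hmono hnonneg hc hm x hx hxq

lemma vv_L2 (hc : 0 ≤ c) {q : ℝ × ℝ} (hq1 : 0 ≤ q.1) (hq2 : 0 ≤ q.2) {y : ℝ}
    (hy : 0 ≤ y) (hyq : y ≤ q.2) :
    vv u c q ≤ vv u c (q.1, y) + c * Real.sqrt ((q.2 - y) * q.1) :=
  csSup_le ⟨0, Ach.base q hq1 hq2⟩ fun _ hm => ach_L2 hmono hnonneg hc hm y hy hyq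

lemma vv_growth (hc : 0 ≤ c) {p : ℝ × ℝ} (hp1 : 0 ≤ p.1) (hp2 : 0 ≤ p.2) {h l : ℝ}
    (hh : 0 ≤ h) (hl : 0 ≤ l) (hsm : c * (Real.sqrt l * h) ≤ u p - vv u c p) :
    vv u c p + c * (Real.sqrt l * h) ≤ vv u c (p.1 + h, p.2 + l * h) := by
  have hEE : Real.sqrt ((p.1 + h - p.1) * (p.2 + l * h - p.2)) = Real.sqrt l * h := by
    rw [show (p.1 + h - p.1) * (p.2 + l * h - p.2) = l * h ^ 2 by ring,
      Real.sqrt_mul hl, Real.sqrt_sq hh]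
  have hach : ∀ m, Ach u c p m →
      Ach u c (p.1 + h, p.2 + l * h) (m + c * Real.sqrt ((p.1 + h - p.1) * (p.2 + l * h - p.2))) := by
    intro m hm
    apply Ach.corner p (p.1 + h, p.2 + l * h) m hm
      (by show p.1 ≤ p.1 + h; linarith)
      (by show p.2 ≤ p.2 + l * h; nlinarith [mul_nonneg hl hh])
    intro θ hθ0 hθ1
    show m + c * θ * Real.sqrt ((p.1 + h - p.1) * (p.2 + l * h - p.2)) ≤
      u (p.1 + θ * (p.1 + h - p.1), p.2 + θ * (p.2 + l * h - p.2))
    have hmv : m ≤ vv u c p := le_csSup (achBdd hmono hnonneg _) hm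
    rw [hEE]
    have hu : u p ≤ u (p.1 + θ * (p.1 + h - p.1), p.2 + θ * (p.2 + l * h - p.2)) := by
      apply hmono p _ hp1 hp2
      · show p.1 ≤ p.1 + θ * (p.1 + h - p.1)
        nlinarith
      · show p.2 ≤ p.2 + θ * (p.2 + l * h - p.2)
        nlinarith [mul_nonneg hl hh]
    have h9 : c * θ * (Real.sqrt l * h) ≤ c * (Real.sqrt l * h) := by
      have hX : 0 ≤ Real.sqrt l * h := mul_nonneg (Real.sqrt_nonneg l) hh
      have h9a : θ * (Real.sqrt l * h) ≤ 1 * (Real.sqrt l * h) :=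
        mul_le_mul_of_nonneg_right hθ1 hX
      have h9b := mul_le_mul_of_nonneg_left h9a hc
      nlinarith [h9b]
    linarith
  have hne : {m | Ach u c p m}.Nonempty := ⟨0, Ach.base p hp1 hp2⟩
  have hfin : vv u c p ≤ vv u c (p.1 + h, p.2 + l * h) - c * (Real.sqrt l * h) := by
    apply csSup_le hne
    intro m hm
    have h10 : m + c * (Real.sqrt l * h) ≤ vv u c (p.1 + h, p.2 + l * h) := by
      have h11 := le_csSup (achBdd hmono hnonneg (p.1 + h, p.2 + l * h)) (hach m hm)
      rw [hEE] at h11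
      exact h11
    linarith
  linarith

set_option maxHeartbeats 2000000 in
lemma vv_continuousOn (hc : 0 < c) :
    ContinuousOn (vv u c) {p : ℝ × ℝ | 0 ≤ p.1 ∧ 0 ≤ p.2} := by
  rw [Metric.continuousOn_iff]
  intro b hb ε hε
  obtain ⟨hb1, hb2⟩ := hb
  obtain ⟨M, hM⟩ : ∃ M : ℝ, M = max b.1 b.2 + 1 := ⟨_, rfl⟩
  have hM0 : 0 < M := by
    have := le_max_left b.1 b.2
    rw [hM]; linarith
  obtain ⟨D, hD⟩ : ∃ D : ℝ, D = ε / (2 * c * Real.sqrt M + 1) := ⟨_, rfl⟩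
  have hden : 0 < 2 * c * Real.sqrt M + 1 := by positivity
  have hD0 : 0 < D := by rw [hD]; exact div_pos hε hden
  refine ⟨min 1 (D ^ 2), by positivity, ?_⟩
  intro a ha hdist
  obtain ⟨ha1, ha2⟩ := ha
  have hd1 : |a.1 - b.1| < min 1 (D ^ 2) := by
    calc |a.1 - b.1| = dist a.1 b.1 := (Real.dist_eq _ _).symm
      _ ≤ dist a b := by rw [Prod.dist_eq]; exact le_max_left _ _
      _ < _ := hdist
  have hd2 : |a.2 - b.2| < min 1 (D ^ 2) := by
    calc |a.2 - b.2| = dist a.2 b.2 := (Real.dist_eq _ _).symm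
      _ ≤ dist a b := by rw [Prod.dist_eq]; exact le_max_right _ _
      _ < _ := hdist
  obtain ⟨A1, hA1⟩ : ∃ A1 : ℝ, A1 = min a.1 b.1 := ⟨_, rfl⟩
  obtain ⟨A2, hA2⟩ : ∃ A2 : ℝ, A2 = min a.2 b.2 := ⟨_, rfl⟩
  obtain ⟨B1, hB1⟩ : ∃ B1 : ℝ, B1 = max a.1 b.1 := ⟨_, rfl⟩
  obtain ⟨B2, hB2⟩ : ∃ B2 : ℝ, B2 = max a.2 b.2 := ⟨_, rfl⟩
  have hA10 : 0 ≤ A1 := by rw [hA1]; exact le_min ha1 hb1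
  have hA20 : 0 ≤ A2 := by rw [hA2]; exact le_min ha2 hb2
  have hAB1 : A1 ≤ B1 := by rw [hA1, hB1]; exact min_le_max
  have hAB2 : A2 ≤ B2 := by rw [hA2, hB2]; exact min_le_max
  have hB10 : 0 ≤ B1 := hA10.trans hAB1
  have hB20 : 0 ≤ B2 := hA20.trans hAB2
  have hBA1 : B1 - A1 = |a.1 - b.1| := by
    rw [hB1, hA1, max_sub_min_eq_abs, abs_sub_comm]
  have hBA2 : B2 - A2 = |a.2 - b.2| := by
    rw [hB2, hA2, max_sub_min_eq_abs, abs_sub_comm]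
  have hB2M : B2 ≤ M := by
    have h1 : a.2 ≤ b.2 + |a.2 - b.2| := by
      rcases abs_cases (a.2 - b.2) with h | h
      · linarith [h.1]
      · linarith [h.1]
    have h2 : |a.2 - b.2| ≤ 1 := le_of_lt (lt_of_lt_of_le hd2 (min_le_left _ _))
    have h3 : b.2 ≤ max b.1 b.2 := le_max_right _ _
    rw [hB2, hM, max_le_iff]
    constructor <;> linarith
  have hA1M : A1 ≤ M := by
    have h3 : b.1 ≤ max b.1 b.2 := le_max_left _ _
    have h4 := min_le_right a.1 b.1
    rw [hA1, hM]
    linarith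
  have step1 : vv u c (B1, B2) ≤ vv u c (A1, B2) + c * Real.sqrt ((B1 - A1) * B2) :=
    vv_L1 hmono hnonneg hc.le (q := (B1, B2)) hB10 hB20 hA10 hAB1
  have step2 : vv u c (A1, B2) ≤ vv u c (A1, A2) + c * Real.sqrt ((B2 - A2) * A1) :=
    vv_L2 hmono hnonneg hc.le (q := (A1, B2)) hA10 hB20 hA20 hAB2
  have hbound1 : Real.sqrt ((B1 - A1) * B2) ≤ D * Real.sqrt M := by
    have h4 : (B1 - A1) * B2 ≤ D ^ 2 * M := by
      have h5 : B1 - A1 ≤ D ^ 2 := by rw [hBA1]; exact (lt_of_lt_of_le hd1 (min_le_right _ _)).le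
      have h6 : 0 ≤ B1 - A1 := by rw [hBA1]; positivity
      nlinarith
    calc Real.sqrt ((B1 - A1) * B2) ≤ Real.sqrt (D ^ 2 * M) := Real.sqrt_le_sqrt h4
      _ = D * Real.sqrt M := by rw [Real.sqrt_mul (sq_nonneg D), Real.sqrt_sq hD0.le]
  have hbound2 : Real.sqrt ((B2 - A2) * A1) ≤ D * Real.sqrt M := by
    have h4 : (B2 - A2) * A1 ≤ D ^ 2 * M := by
      have h5 : B2 - A2 ≤ D ^ 2 := by rw [hBA2]; exact (lt_of_lt_of_le hd2 (min_le_right _ _)).le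
      have h6 : 0 ≤ B2 - A2 := by rw [hBA2]; positivity
      nlinarith
    calc Real.sqrt ((B2 - A2) * A1) ≤ Real.sqrt (D ^ 2 * M) := Real.sqrt_le_sqrt h4
      _ = D * Real.sqrt M := by rw [Real.sqrt_mul (sq_nonneg D), Real.sqrt_sq hD0.le]
  have hspread : vv u c (B1, B2) ≤ vv u c (A1, A2) + 2 * c * Real.sqrt M * D := by
    have h7 := mul_le_mul_of_nonneg_left hbound1 hc.le
    have h8 := mul_le_mul_of_nonneg_left hbound2 hc.le
    nlinarith
  have hfinal : 2 * c * Real.sqrt M * D < ε := by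
    have h9 : D * (2 * c * Real.sqrt M + 1) = ε := by
      rw [hD]; field_simp
    nlinarith
  have hva1 : vv u c (A1, A2) ≤ vv u c a :=
    vv_mono hmono hnonneg (p := (A1, A2)) (q := a) hA10 hA20
      (by rw [hA1]; exact min_le_left _ _) (by rw [hA2]; exact min_le_left _ _)
  have hva2 : vv u c a ≤ vv u c (B1, B2) :=
    vv_mono hmono hnonneg (p := a) (q := (B1, B2)) ha1 ha2
      (by rw [hB1]; exact le_max_left _ _) (by rw [hB2]; exact le_max_left _ _)
  have hvb1 : vv u c (A1, A2) ≤ vv u c b :=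
    vv_mono hmono hnonneg (p := (A1, A2)) (q := b) hA10 hA20
      (by rw [hA1]; exact min_le_right _ _) (by rw [hA2]; exact min_le_right _ _)
  have hvb2 : vv u c b ≤ vv u c (B1, B2) :=
    vv_mono hmono hnonneg (p := b) (q := (B1, B2)) hb1 hb2
      (by rw [hB1]; exact le_max_right _ _) (by rw [hB2]; exact le_max_right _ _)
  rw [Real.dist_eq, abs_lt]
  constructor <;> nlinarith

end

end Stmt15

set_option maxHeartbeats 4000000 in
open Stmt15 in
theorem stmt_15 (u : ℝ × ℝ → ℝ)
    (hmono : ∀ p q : ℝ × ℝ, 0 ≤ p.1 → 0 ≤ p.2 → p.1 ≤ q.1 → p.2 ≤ q.2 → u p ≤ u q)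
    (hnonneg : ∀ p : ℝ × ℝ, 0 ≤ p.1 → 0 ≤ p.2 → 0 ≤ u p)
    (haxes : ∀ t : ℝ, 0 ≤ t → u (0, t) = 0 ∧ u (t, 0) = 0)
    (C : ℝ) (hC : 0 < C) :
    ∃ v : ℝ × ℝ → ℝ,
      ContinuousOn v {p : ℝ × ℝ | 0 ≤ p.1 ∧ 0 ≤ p.2} ∧
      (∀ p q : ℝ × ℝ, 0 ≤ p.1 → 0 ≤ p.2 → p.1 ≤ q.1 → p.2 ≤ q.2 → v p ≤ v q) ∧
      (∀ p : ℝ × ℝ, 0 ≤ p.1 → 0 ≤ p.2 → 0 ≤ v p ∧ v p ≤ u p) ∧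
      (∀ p : ℝ × ℝ, 0 ≤ p.1 → 0 ≤ p.2 → v p ≠ u p → DifferentiableAt ℝ v p →
        C ≤ deriv (fun t => v (t, p.2)) p.1 * deriv (fun t => v (p.1, t)) p.2) := by
  have hk : 0 < Real.sqrt C := Real.sqrt_pos.mpr hC
  obtain ⟨c, hcdef⟩ : ∃ c : ℝ, c = 2 * Real.sqrt C := ⟨_, rfl⟩
  have hc0 : 0 < c := by rw [hcdef]; positivity
  refine ⟨vv u c, vv_continuousOn hmono hnonneg hc0, ?_, ?_, ?_⟩
  · intro p q hp1 hp2 h1 h2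
    exact vv_mono hmono hnonneg hp1 hp2 h1 h2
  · intro p hp1 hp2
    exact ⟨vv_nonneg hmono hnonneg hp1 hp2, vv_le_u hmono hnonneg hp1 hp2⟩
  · intro p hp1 hp2 hne hdiff
    have hvu : vv u c p < u p :=
      lt_of_le_of_ne (vv_le_u hmono hnonneg hp1 hp2) hne
    obtain ⟨δ, hδdef⟩ : ∃ δ : ℝ, δ = u p - vv u c p := ⟨_, rfl⟩
    have hδ : 0 < δ := by rw [hδdef]; linarith
    obtain ⟨L, hLdef⟩ : ∃ L : ℝ × ℝ →L[ℝ] ℝ, L = fderiv ℝ (vv u c) p := ⟨_, rfl⟩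
    have hfd : HasFDerivAt (vv u c) L p := by rw [hLdef]; exact hdiff.hasFDerivAt
    -- slice derivatives
    have hlx : HasDerivAt (fun t : ℝ => (t, p.2)) ((1 : ℝ), (0 : ℝ)) p.1 :=
      (hasDerivAt_id p.1).prodMk (hasDerivAt_const p.1 p.2)
    have hly : HasDerivAt (fun t : ℝ => (p.1, t)) ((0 : ℝ), (1 : ℝ)) p.2 :=
      (hasDerivAt_const p.2 p.1).prodMk (hasDerivAt_id p.2)
    have hDx : HasDerivAt (fun t => vv u c (t, p.2)) (L (1, 0)) p.1 :=
      (hfd.comp_hasDerivAt p.1 hlx :)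
    have hDy : HasDerivAt (fun t => vv u c (p.1, t)) (L (0, 1)) p.2 :=
      (hfd.comp_hasDerivAt p.2 hly :)
    have key : ∀ l : ℝ, 0 < l → c * Real.sqrt l ≤ L (1, 0) + l * L (0, 1) := by
      intro l hl
      have hsl : 0 ≤ Real.sqrt l := Real.sqrt_nonneg l
      obtain ⟨K, hKdef⟩ : ∃ K : ℝ, K = c * Real.sqrt l + 1 := ⟨_, rfl⟩
      have hK : 0 < K := by rw [hKdef]; positivity
      obtain ⟨h₀, hh₀def⟩ : ∃ h₀ : ℝ, h₀ = δ / K := ⟨_, rfl⟩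
      have hh₀pos : 0 < h₀ := by rw [hh₀def]; positivity
      have hline : HasDerivAt (fun h : ℝ => (p.1 + h, p.2 + l * h)) ((1 : ℝ), l) 0 := by
        have h1 : HasDerivAt (fun h : ℝ => p.1 + h) 1 0 := (hasDerivAt_id 0).const_add p.1
        have h2 : HasDerivAt (fun h : ℝ => p.2 + l * h) l 0 := by
          simpa using ((hasDerivAt_id 0).const_mul l).const_add p.2
        exact h1.prodMk h2
      have hfd0 : HasFDerivAt (vv u c) L (p.1 + (0 : ℝ), p.2 + l * 0) := by
        have e : (p.1 + (0 : ℝ), p.2 + l * 0) = p := by simp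
        rw [e]; exact hfd
      have hg : HasDerivAt (fun h : ℝ => vv u c (p.1 + h, p.2 + l * h)) (L (1, l)) 0 :=
        (hfd0.comp_hasDerivAt 0 hline :)
      have hslope := hasDerivAt_iff_tendsto_slope.mp hg
      have hslope' : Filter.Tendsto (slope (fun h : ℝ => vv u c (p.1 + h, p.2 + l * h)) 0)
          (nhdsWithin 0 (Set.Ioi 0)) (nhds (L (1, l))) :=
        hslope.mono_left (nhdsWithin_mono 0 (fun x hx => ne_of_gt hx))
      have hev : ∀ᶠ h in nhdsWithin (0:ℝ) (Set.Ioi 0),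
          c * Real.sqrt l ≤ slope (fun h : ℝ => vv u c (p.1 + h, p.2 + l * h)) 0 h := by
        filter_upwards [Ioc_mem_nhdsGT_of_mem (Set.left_mem_Ico.mpr hh₀pos)] with h hh
        obtain ⟨hh1, hh2⟩ := hh
        have hsmall : c * (Real.sqrt l * h) ≤ u p - vv u c p := by
          have e1 : c * Real.sqrt l * h ≤ c * Real.sqrt l * h₀ :=
            mul_le_mul_of_nonneg_left hh2 (by positivity)
          have e2 : c * Real.sqrt l * h₀ ≤ δ := by
            rw [hh₀def]
            have e3 : c * Real.sqrt l ≤ K := by rw [hKdef]; linarith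
            have e4 : K * (δ / K) = δ := by field_simp
            nlinarith [div_pos hδ hK]
          rw [← hδdef]
          nlinarith
        have hgrow := vv_growth hmono hnonneg hc0.le hp1 hp2 hh1.le hl.le hsmall
        rw [slope_def_field]
        rw [le_div_iff₀ (by linarith : (0:ℝ) < h - 0)]
        have e0 : vv u c (p.1 + 0, p.2 + l * 0) = vv u c p := by norm_num
        rw [e0]
        nlinarith [hgrow]
      have hLl := ge_of_tendsto hslope' hev
      have e : ((1 : ℝ), l) = ((1 : ℝ), (0 : ℝ)) + l • ((0 : ℝ), (1 : ℝ)) := by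
        simp [Prod.ext_iff]
      rw [e, map_add, map_smul] at hLl
      simpa using hLl
    -- conclude the product bound
    have hβ : 0 < L (0, 1) := by
      by_contra hβ'
      push_neg at hβ'
      obtain ⟨l, hldef⟩ : ∃ l : ℝ, l = (max (L (1, 0)) 0 / c + 1) ^ 2 := ⟨_, rfl⟩
      have hlpos : 0 < l := by
        rw [hldef]
        have : 0 ≤ max (L (1, 0)) 0 / c := div_nonneg (le_max_right _ _) hc0.le
        positivity
      have hsq : Real.sqrt l = max (L (1, 0)) 0 / c + 1 := by
        rw [hldef]
        exact Real.sqrt_sq (by positivity)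
      have h1 := key l hlpos
      have h2 : L (1, 0) + l * L (0, 1) ≤ L (1, 0) := by nlinarith
      have h3 : L (1, 0) < c * Real.sqrt l := by
        rw [hsq]
        have e5 : c * (max (L (1, 0)) 0 / c + 1) = max (L (1, 0)) 0 + c := by
          field_simp
        rw [e5]
        have := le_max_left (L (1, 0)) 0
        linarith
      linarith
    have hαβ : C ≤ L (1, 0) * L (0, 1) := by
      obtain ⟨l, hldef⟩ : ∃ l : ℝ, l = (Real.sqrt C / L (0, 1)) ^ 2 := ⟨_, rfl⟩
      have hlpos : 0 < l := by
        rw [hldef]; positivity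
      have h1 := key l hlpos
      have hsq : Real.sqrt l = Real.sqrt C / L (0, 1) := by
        rw [hldef]; exact Real.sqrt_sq (by positivity)
      rw [hsq, hcdef] at h1
      have e1 : Real.sqrt C / L (0, 1) * L (0, 1) = Real.sqrt C :=
        div_mul_cancel₀ _ hβ.ne'
      have e2 : Real.sqrt C ^ 2 = C := Real.sq_sqrt hC.le
      have h4 := mul_le_mul_of_nonneg_right h1 hβ.le
      have e3 : (Real.sqrt C / L (0, 1)) ^ 2 * L (0, 1) * L (0, 1) = C := by
        rw [hldef] at hlpos
        calc (Real.sqrt C / L (0, 1)) ^ 2 * L (0, 1) * L (0, 1)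
            = (Real.sqrt C / L (0, 1) * L (0, 1)) ^ 2 := by ring
          _ = Real.sqrt C ^ 2 := by rw [e1]
          _ = C := e2
      have e4 : 2 * Real.sqrt C * (Real.sqrt C / L (0, 1)) * L (0, 1) = 2 * C := by
        calc 2 * Real.sqrt C * (Real.sqrt C / L (0, 1)) * L (0, 1)
            = 2 * Real.sqrt C * (Real.sqrt C / L (0, 1) * L (0, 1)) := by ring
          _ = 2 * Real.sqrt C * Real.sqrt C := by rw [e1]
          _ = 2 * C := by nlinarith [e2]
      rw [hldef] at h4
      nlinarith [h4, e3, e4]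
    rw [hDx.deriv, hDy.deriv]
    exact hαβ
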